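/- arXiv:2407.13176 — 2 statements merged into one kernel-verified Lean document; each statement's English description precedes it below -/
import Mathlib

section
/- For every rotation matrix R in SO(3) with tr(R) ≠ −1, there exists a unique vector u ∈ ℝ³ with ‖u‖ < π such that the matrix exponential of u^∧ equals R. (This makes the logarithm map well defined on the subset SO°(3) of rotations with rotation angle strictly less than π.) -/
open Matrix

noncomputable section

/-- The `hat` map sending `u ∈ ℝ³` to the skew-symmetric matrix `u^∧` with `u^∧ v = u × v`. -/
def hat (u : EuclideanSpace ℝ (Fin 3)) : Matrix (Fin 3) (Fin 3) ℝ :=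
  !![0, -u 2, u 1; u 2, 0, -u 0; -u 1, u 0, 0]

/-- `R ∈ SO(3)`: real 3×3 matrices with `RᵀR = I` and `det R = 1`. -/
def SO3 (R : Matrix (Fin 3) (Fin 3) ℝ) : Prop := Rᵀ * R = 1 ∧ R.det = 1

open NormedSpace
open scoped Nat

/-! ### Auxiliary lemmas about `hat` -/

lemma norm_sq_eq (u : EuclideanSpace ℝ (Fin 3)) : ‖u‖^2 = u 0^2 + u 1^2 + u 2^2 := by
  rw [EuclideanSpace.norm_eq, Real.sq_sqrt (by positivity)]
  simp [Fin.sum_univ_three, sq_abs]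

lemma hat_cube (u : EuclideanSpace ℝ (Fin 3)) :
    hat u * hat u * hat u = (-(‖u‖^2)) • hat u := by
  rw [norm_sq_eq]
  ext i j
  fin_cases i <;> fin_cases j <;>
    simp [hat, Matrix.mul_apply, Fin.sum_univ_three] <;> ring

lemma hat_smul (r : ℝ) (u : EuclideanSpace ℝ (Fin 3)) : hat (r • u) = r • hat u := by
  ext i j
  fin_cases i <;> fin_cases j <;> simp [hat]

lemma hat_transpose (u : EuclideanSpace ℝ (Fin 3)) : (hat u)ᵀ = -hat u := by
  ext i j
  fin_cases i <;> fin_cases j <;> simp [hat]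

lemma hat_inj {u v : EuclideanSpace ℝ (Fin 3)} (h : hat u = hat v) : u = v := by
  have h0 := congrFun (congrFun h 2) 1
  have h1 := congrFun (congrFun h 0) 2
  have h2 := congrFun (congrFun h 1) 0
  simp [hat] at h0 h1 h2
  ext i
  fin_cases i <;> assumption

lemma trace_hat_sq (u : EuclideanSpace ℝ (Fin 3)) :
    ((hat u * hat u)).trace = -2 * ‖u‖^2 := by
  rw [norm_sq_eq]
  simp [Matrix.trace_fin_three, hat, Matrix.mul_apply, Fin.sum_univ_three]
  ring

lemma trace_hat (u : EuclideanSpace ℝ (Fin 3)) : (hat u).trace = 0 := by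
  simp [Matrix.trace_fin_three, hat]

lemma hat_zero : hat 0 = 0 := by
  have h := hat_smul 0 0
  rw [zero_smul, zero_smul] at h
  exact h

/-! ### The Rodrigues formula -/

lemma pow_odd {A : Matrix (Fin 3) (Fin 3) ℝ} {c : ℝ} (h : A * A * A = c • A) (k : ℕ) :
    A ^ (2*k+1) = (c^k) • A := by
  induction k with
  | zero => simp
  | succ n ih =>
    have h2 : 2*(n+1)+1 = (2*n+1) + 2 := by ring
    rw [h2, pow_add, ih, pow_two, smul_mul_assoc, ← mul_assoc, h, smul_smul, pow_succ, mul_comm]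

lemma pow_even {A : Matrix (Fin 3) (Fin 3) ℝ} {c : ℝ} (h : A * A * A = c • A) (k : ℕ) :
    A ^ (2*k+2) = (c^k) • (A*A) := by
  have h1 := pow_odd h k
  have h2 : 2*k+2 = (2*k+1) + 1 := by ring
  rw [h2, pow_succ, h1, smul_mul_assoc]

set_option maxHeartbeats 1000000 in
lemma exp_eq_of_cube {A : Matrix (Fin 3) (Fin 3) ℝ} (θ : ℝ) (hθ : θ ≠ 0)
    (h : A * A * A = (-(θ^2)) • A) :
    exp A = 1 + (Real.sin θ / θ) • A + ((1 - Real.cos θ)/θ^2) • (A*A) := by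
  letI : SeminormedRing (Matrix (Fin 3) (Fin 3) ℝ) := Matrix.linftyOpSemiNormedRing
  letI : NormedRing (Matrix (Fin 3) (Fin 3) ℝ) := Matrix.linftyOpNormedRing
  letI : NormedAlgebra ℝ (Matrix (Fin 3) (Fin 3) ℝ) := Matrix.linftyOpNormedAlgebra
  rw [exp_eq_tsum (𝕂 := ℝ)]
  refine HasSum.tsum_eq ?_
  have hsin : HasSum (fun k : ℕ => (((2*k+1)! : ℝ))⁻¹ * (-(θ^2))^k) (Real.sin θ / θ) := by
    have h1 := (Real.hasSum_sin θ).div_const θ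
    convert h1 using 1
    · rfl
    funext k
    field_simp
    ring_nf
  have hcos : HasSum (fun k : ℕ => (((2*k+2)! : ℝ))⁻¹ * (-(θ^2))^k) ((1 - Real.cos θ)/θ^2) := by
    have h0 := (Real.hasSum_cos θ)
    rw [← hasSum_nat_add_iff' 1] at h0
    have h1 := h0.div_const (-(θ^2))
    convert h1 using 1
    · rfl
    · funext k
      have h2 : 2*(k+1) = 2*k+2 := by ring
      rw [h2]
      field_simp
      ring_nf
    · simp only [Finset.range_one, Finset.sum_singleton, pow_zero, mul_one, Nat.mul_zero,
        Nat.factorial_zero, Nat.cast_one, one_mul, div_one]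
      field_simp
      ring
  have hA1 : HasSum (fun k : ℕ => (((2*k+1)! : ℝ))⁻¹ • A ^ (2*k+1)) ((Real.sin θ / θ) • A) := by
    have h1 := hsin.smul_const A
    convert h1 using 1
    funext k
    rw [pow_odd h, smul_smul]
  have hA2 : HasSum (fun k : ℕ => (((2*k+2)! : ℝ))⁻¹ • A ^ (2*k+2))
      (((1 - Real.cos θ)/θ^2) • (A*A)) := by
    have h1 := hcos.smul_const (A*A)
    convert h1 using 1
    funext k
    rw [pow_even h, smul_smul]
  have heven : HasSum (fun k : ℕ => (((2*k)! : ℝ))⁻¹ • A ^ (2*k))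
      (1 + ((1 - Real.cos θ)/θ^2) • (A*A)) := by
    rw [← hasSum_nat_add_iff' 1]
    convert hA2 using 1
    · rfl
    · funext n
      rw [show 2*(n+1) = 2*n+2 by ring]
    simp
  have hfin := HasSum.even_add_odd (f := fun n : ℕ => ((n ! : ℝ))⁻¹ • A ^ n) heven hA1
  have he : 1 + (Real.sin θ / θ) • A + ((1 - Real.cos θ)/θ^2) • (A*A)
      = (1 + ((1 - Real.cos θ)/θ^2) • (A*A)) + (Real.sin θ / θ) • A := by abel
  rw [he]
  exact hfin

lemma rodrigues {u : EuclideanSpace ℝ (Fin 3)} (hu : u ≠ 0) :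
    exp (hat u) = 1 + (Real.sin ‖u‖ / ‖u‖) • hat u
      + ((1 - Real.cos ‖u‖)/‖u‖^2) • (hat u * hat u) :=
  exp_eq_of_cube ‖u‖ (norm_ne_zero_iff.mpr hu) (hat_cube u)

lemma trace_exp_hat (u : EuclideanSpace ℝ (Fin 3)) :
    (exp (hat u)).trace = 1 + 2 * Real.cos ‖u‖ := by
  rcases eq_or_ne u 0 with rfl | hu
  · rw [hat_zero, exp_zero]
    norm_num [Matrix.trace_one]
  · have hθ : ‖u‖ ≠ 0 := norm_ne_zero_iff.mpr hu
    rw [rodrigues hu, Matrix.trace_add, Matrix.trace_add, Matrix.trace_smul, Matrix.trace_smul,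
      trace_hat, trace_hat_sq, Matrix.trace_one]
    field_simp
    simp only [Fintype.card_fin, Nat.cast_ofNat, smul_eq_mul]
    field_simp
    ring

lemma antisym_exp_hat (u : EuclideanSpace ℝ (Fin 3)) :
    exp (hat u) - (exp (hat u))ᵀ = (2 * Real.sin ‖u‖ / ‖u‖) • hat u := by
  rcases eq_or_ne u 0 with rfl | hu
  · rw [hat_zero, exp_zero]
    simp
  · rw [rodrigues hu, Matrix.transpose_add, Matrix.transpose_add, Matrix.transpose_smul,
      Matrix.transpose_smul, Matrix.transpose_one, Matrix.transpose_mul, hat_transpose]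
    have h2 : -hat u * -hat u = hat u * hat u := by rw [neg_mul_neg]
    rw [h2]
    match_scalars <;> ring

/-- Uniqueness part. -/
lemma exp_hat_injOn {u v : EuclideanSpace ℝ (Fin 3)} (hu : ‖u‖ < Real.pi)
    (hv : ‖v‖ < Real.pi) (h : exp (hat u) = exp (hat v)) : u = v := by
  have htr : (1 : ℝ) + 2 * Real.cos ‖u‖ = 1 + 2 * Real.cos ‖v‖ := by
    rw [← trace_exp_hat, ← trace_exp_hat, h]
  have hcos : Real.cos ‖u‖ = Real.cos ‖v‖ := by linarith
  have hnorm : ‖u‖ = ‖v‖ :=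
    Real.injOn_cos ⟨norm_nonneg u, hu.le⟩ ⟨norm_nonneg v, hv.le⟩ hcos
  rcases eq_or_lt_of_le (norm_nonneg u) with h0 | hpos
  · have hu0 : u = 0 := norm_eq_zero.mp h0.symm
    have hv0 : v = 0 := norm_eq_zero.mp (hnorm ▸ h0.symm)
    rw [hu0, hv0]
  · have hsin : Real.sin ‖u‖ > 0 := Real.sin_pos_of_pos_of_lt_pi hpos hu
    have ha := antisym_exp_hat u
    rw [h, antisym_exp_hat v, ← hnorm] at ha
    have hc : (2 * Real.sin ‖u‖ / ‖u‖) ≠ 0 := by positivity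
    have := smul_right_injective (Matrix (Fin 3) (Fin 3) ℝ) hc ha.symm
    exact hat_inj this

/-! ### Algebraic lemmas about SO(3) -/

lemma adj3 (A : Matrix (Fin 3) (Fin 3) ℝ) :
    adjugate A = A*A - A.trace • A + (adjugate A).trace • (1 : Matrix (Fin 3) (Fin 3) ℝ) := by
  ext i j
  fin_cases i <;> fin_cases j <;>
    simp [adjugate_fin_three, Matrix.trace_fin_three, Matrix.mul_apply, Fin.sum_univ_three,
      Matrix.one_apply] <;> ring

variable {R : Matrix (Fin 3) (Fin 3) ℝ}

lemma hadj (hR : SO3 R) : Rᵀ = adjugate R := by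
  have h1 : R * adjugate R = 1 := by rw [mul_adjugate, hR.2, one_smul]
  calc Rᵀ = Rᵀ * (R * adjugate R) := by rw [h1, mul_one]
  _ = (Rᵀ * R) * adjugate R := by rw [mul_assoc]
  _ = adjugate R := by rw [hR.1, one_mul]

lemma hstar (hR : SO3 R) :
    Rᵀ = R*R - R.trace • R + R.trace • (1 : Matrix (Fin 3) (Fin 3) ℝ) := by
  have h2 : (adjugate R).trace = R.trace := by rw [← hadj hR, Matrix.trace_transpose]
  calc Rᵀ = adjugate R := hadj hR
  _ = _ := by rw [adj3, h2]

lemma key (hR : SO3 R) :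
    (R - Rᵀ) * (R - Rᵀ)
      = (1 + R.trace) • (R + Rᵀ) - (2 + 2*R.trace) • (1 : Matrix (Fin 3) (Fin 3) ℝ) := by
  have hRRt : R * Rᵀ = 1 := mul_eq_one_comm.mp hR.1
  set t := R.trace with ht
  have hsq : Rᵀ*Rᵀ = t•(R*R) + (1-t^2)•R + (t^2-t)•(1 : Matrix (Fin 3) (Fin 3) ℝ) := by
    calc Rᵀ*Rᵀ = Rᵀ*(R*R - t•R + t•(1 : Matrix (Fin 3) (Fin 3) ℝ)) := by rw [← hstar hR]
    _ = (Rᵀ*R)*R - t•(Rᵀ*R) + t•Rᵀ := by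
        rw [mul_add, mul_sub, mul_smul_comm, mul_smul_comm, mul_one, mul_assoc]
    _ = R - t•(1 : Matrix (Fin 3) (Fin 3) ℝ) + t•Rᵀ := by rw [hR.1, one_mul]
    _ = _ := by rw [hstar hR]; module
  have hexp : (R - Rᵀ) * (R - Rᵀ) = R*R + Rᵀ*Rᵀ - (R*Rᵀ) - (Rᵀ*R) := by
    rw [sub_mul, mul_sub, mul_sub]
    abel
  rw [hexp, hRRt, hR.1, hsq, hstar hR]
  module

lemma col_entries (hR : SO3 R) (j : Fin 3) : R 0 j^2 + R 1 j^2 + R 2 j^2 = 1 := by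
  have e := congrFun (congrFun hR.1 j) j
  simp [Matrix.mul_apply, Fin.sum_univ_three, Matrix.one_apply] at e
  linear_combination e

lemma cof0 (hR : SO3 R) : R 0 0 = R 1 1 * R 2 2 - R 1 2 * R 2 1 := by
  have e := congrFun (congrFun (hadj hR) 0) 0
  simpa [adjugate_fin_three] using e

lemma cof1 (hR : SO3 R) : R 1 1 = R 0 0 * R 2 2 - R 0 2 * R 2 0 := by
  have e := congrFun (congrFun (hadj hR) 1) 1
  simpa [adjugate_fin_three] using e

lemma cof2 (hR : SO3 R) : R 2 2 = R 0 0 * R 1 1 - R 0 1 * R 1 0 := by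
  have e := congrFun (congrFun (hadj hR) 2) 2
  simpa [adjugate_fin_three] using e

lemma wnorm (hR : SO3 R) :
    (R 2 1 - R 1 2)^2 + (R 0 2 - R 2 0)^2 + (R 1 0 - R 0 1)^2
      = 3 + 2*R.trace - R.trace^2 := by
  rw [Matrix.trace_fin_three]
  have C0 := col_entries hR 0
  have C1 := col_entries hR 1
  have C2 := col_entries hR 2
  have K0 := cof0 hR
  have K1 := cof1 hR
  have K2 := cof2 hR
  linear_combination C0 + C1 + C2 - 2*K0 - 2*K1 - 2*K2

lemma trace_mem (hR : SO3 R) : -1 ≤ R.trace ∧ R.trace ≤ 3 := by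
  have h := wnorm hR
  constructor <;> nlinarith [sq_nonneg (R 2 1 - R 1 2), sq_nonneg (R 0 2 - R 2 0),
    sq_nonneg (R 1 0 - R 0 1)]

set_option maxHeartbeats 1000000 in
lemma eq_one_of_trace_eq_three (hR : SO3 R) (h3 : R.trace = 3) : R = 1 := by
  rw [Matrix.trace_fin_three] at h3
  have C0 := col_entries hR 0
  have C1 := col_entries hR 1
  have C2 := col_entries hR 2
  have b0 : R 0 0 ≤ 1 := by nlinarith [sq_nonneg (R 0 0 - 1), sq_nonneg (R 1 0), sq_nonneg (R 2 0)]
  have b1 : R 1 1 ≤ 1 := by nlinarith [sq_nonneg (R 1 1 - 1), sq_nonneg (R 0 1), sq_nonneg (R 2 1)]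
  have b2 : R 2 2 ≤ 1 := by nlinarith [sq_nonneg (R 2 2 - 1), sq_nonneg (R 0 2), sq_nonneg (R 1 2)]
  have d0 : R 0 0 = 1 := by linarith
  have d1 : R 1 1 = 1 := by linarith
  have d2 : R 2 2 = 1 := by linarith
  have s0 : R 0 0 ^ 2 = 1 := by rw [d0]; norm_num
  have s1 : R 1 1 ^ 2 = 1 := by rw [d1]; norm_num
  have s2 : R 2 2 ^ 2 = 1 := by rw [d2]; norm_num
  have hz : ∀ x : ℝ, x ^ 2 = 0 → x = 0 := fun x hx => by
    exact (pow_eq_zero_iff (two_ne_zero)).mp hx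
  have o01 : R 0 1 = 0 := hz _ (by nlinarith [sq_nonneg (R 0 1), sq_nonneg (R 2 1)])
  have o21 : R 2 1 = 0 := hz _ (by nlinarith [sq_nonneg (R 0 1), sq_nonneg (R 2 1)])
  have o02 : R 0 2 = 0 := hz _ (by nlinarith [sq_nonneg (R 0 2), sq_nonneg (R 1 2)])
  have o12 : R 1 2 = 0 := hz _ (by nlinarith [sq_nonneg (R 0 2), sq_nonneg (R 1 2)])
  have o10 : R 1 0 = 0 := hz _ (by nlinarith [sq_nonneg (R 1 0), sq_nonneg (R 2 0)])
  have o20 : R 2 0 = 0 := hz _ (by nlinarith [sq_nonneg (R 1 0), sq_nonneg (R 2 0)])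
  ext i j
  fin_cases i <;> fin_cases j <;>
    simp [Matrix.one_apply, d0, d1, d2, o01, o21, o02, o12, o10, o20]

/-! ### The main theorem -/

/-- For every rotation matrix `R ∈ SO(3)` with `tr R ≠ -1`, there exists a unique `u ∈ ℝ³`
with `‖u‖ < π` such that `exp (u^∧) = R`. -/
theorem so3_log_exists_unique (R : Matrix (Fin 3) (Fin 3) ℝ) (hR : SO3 R)
    (htr : R.trace ≠ -1) :
    ∃! u : EuclideanSpace ℝ (Fin 3), ‖u‖ < Real.pi ∧ NormedSpace.exp (hat u) = R := by
  have huniq : ∀ y u : EuclideanSpace ℝ (Fin 3),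
      (‖y‖ < Real.pi ∧ exp (hat y) = R) → (‖u‖ < Real.pi ∧ exp (hat u) = R) → y = u := by
    intro y u hy hu
    exact exp_hat_injOn hy.1 hu.1 (hy.2.trans hu.2.symm)
  set t := R.trace with ht
  have htm := trace_mem hR
  have htlow : -1 < t := lt_of_le_of_ne htm.1 (Ne.symm htr)
  rcases eq_or_lt_of_le htm.2 with h3 | h3
  · -- t = 3, R = 1
    refine ⟨0, ⟨by simpa using Real.pi_pos, ?_⟩, fun y hy => huniq y 0 hy ⟨by simpa using Real.pi_pos, ?_⟩⟩ <;>
      rw [hat_zero, exp_zero, eq_one_of_trace_eq_three hR h3]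
  · -- -1 < t < 3
    set c : ℝ := (t-1)/2 with hc
    have hc1 : -1 < c := by rw [hc]; linarith
    have hc2 : c < 1 := by rw [hc]; linarith
    set θ := Real.arccos c with hθ
    have hθpos : 0 < θ := Real.arccos_pos.mpr hc2
    have hcos : Real.cos θ = c := Real.cos_arccos hc1.le hc2.le
    have hθπ : θ < Real.pi := by
      rcases lt_or_eq_of_le (Real.arccos_le_pi c) with h | h
      · exact h
      · exfalso
        rw [hθ, h] at hcos
        rw [Real.cos_pi] at hcos
        linarith
    set s := Real.sin θ with hs
    have hspos : 0 < s := Real.sin_pos_of_pos_of_lt_pi hθpos hθπ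
    have hs2 : s^2 = 1 - c^2 := by rw [hs, Real.sin_sq, hcos]
    set w : EuclideanSpace ℝ (Fin 3) :=
      (WithLp.equiv 2 (Fin 3 → ℝ)).symm ![(R 2 1 - R 1 2)/2, (R 0 2 - R 2 0)/2, (R 1 0 - R 0 1)/2]
      with hw
    have hw0 : w 0 = (R 2 1 - R 1 2)/2 := rfl
    have hw1 : w 1 = (R 0 2 - R 2 0)/2 := rfl
    have hw2 : w 2 = (R 1 0 - R 0 1)/2 := rfl
    have hwsq : ‖w‖^2 = s^2 := by
      rw [norm_sq_eq, hw0, hw1, hw2, hs2]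
      have := wnorm hR
      rw [← ht] at this
      rw [hc]
      linear_combination this/4
    have hwn : ‖w‖ = s := by
      rw [← Real.sqrt_sq (norm_nonneg w), hwsq, Real.sqrt_sq hspos.le]
    set u : EuclideanSpace ℝ (Fin 3) := (θ/s) • w with hu
    have hun : ‖u‖ = θ := by
      rw [hu, norm_smul, hwn, Real.norm_eq_abs, abs_of_pos (by positivity)]
      field_simp
    have hu0 : u ≠ 0 := by
      intro h0
      rw [h0, norm_zero] at hun
      exact hθpos.ne hun
    have hhatw : hat w = (2⁻¹ : ℝ) • (R - Rᵀ) := by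
      ext i j
      fin_cases i <;> fin_cases j <;>
        simp [hat, hw0, hw1, hw2, Matrix.sub_apply] <;> ring
    refine ⟨u, ⟨by rw [hun]; exact hθπ, ?_⟩, fun y hy => huniq y u hy ⟨by rw [hun]; exact hθπ, ?_⟩⟩ <;>
    · rw [rodrigues hu0, hun, hcos, hu, hat_smul, hhatw]
      simp only [smul_smul, smul_mul_assoc, mul_smul_comm]
      rw [key hR, ← ht]
      have hq : Real.sin θ ^ 2 = (3 + 2*t - t^2)/4 := by
        rw [← hs, hs2, hc]; ring
      have hq' : s ^ 2 = (3 + 2*t - t^2)/4 := by rw [hs]; exact hq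
      match_scalars
      · field_simp
        linear_combination 2 * hq'
      · field_simp
        linear_combination (-2) * hq
      · field_simp
        linear_combination (-2) * hq
end
end

section
/- Let P₁ and P₂ be real n×n symmetric positive definite matrices, μ ∈ ℝⁿ, and α ∈ (0,1). Define X = (α P₁⁻¹ + (1−α) P₂⁻¹)⁻¹, û = X (1−α) P₂⁻¹ μ, d² = μᵀ ((1/α) P₁ + (1/(1−α)) P₂)⁻¹ μ, and k = 1 − d². Then for every u ∈ ℝⁿ lying in the intersection of the two ellipsoids E(0, P₁) = {u : uᵀ P₁⁻¹ u ≤ 1} and E(μ, P₂) = {u : (u−μ)ᵀ P₂⁻¹ (u−μ) ≤ 1}, one has (u − û)ᵀ X⁻¹ (u − û) ≤ k; that is, the intersection is contained in the convex combination ellipsoid E(û, k X). In particular, if the intersection is nonempty then k ≥ 0. -/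
open Matrix

private lemma posdef_smul' {n : ℕ} {M : Matrix (Fin n) (Fin n) ℝ} (hM : M.PosDef) {c : ℝ}
    (hc : 0 < c) : (c • M).PosDef := by
  refine Matrix.PosDef.of_dotProduct_mulVec_pos ?_ ?_
  · rw [Matrix.IsHermitian, conjTranspose_smul, hM.isHermitian.eq]
    simp
  · intro x hx
    rw [smul_mulVec, dotProduct_smul, smul_eq_mul]
    exact mul_pos hc (hM.dotProduct_mulVec_pos hx)

private lemma dot_symm' {n : ℕ} {M : Matrix (Fin n) (Fin n) ℝ} (hM : M.IsHermitian)
    (v w : Fin n → ℝ) : v ⬝ᵥ (M *ᵥ w) = w ⬝ᵥ (M *ᵥ v) := by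
  have ht : Mᵀ = M := by
    have := hM.eq
    rwa [conjTranspose_eq_transpose_of_trivial] at this
  rw [Matrix.dotProduct_mulVec, ← mulVec_transpose, ht, dotProduct_comm]

/-- CCE fusion: with `X = (α P₁⁻¹ + (1−α) P₂⁻¹)⁻¹`, `uhat = X ((1−α) P₂⁻¹ μ)`,
`d² = μᵀ ((1/α) P₁ + (1/(1−α)) P₂)⁻¹ μ` and `k = 1 − d²`, every `u` in the intersection of the
ellipsoids `E(0, P₁)` and `E(μ, P₂)` satisfies `(u−uhat)ᵀ X⁻¹ (u−uhat) ≤ k`, i.e. the intersection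
is contained in `E(uhat, k X)`; in particular if the intersection is nonempty then `k ≥ 0`. -/
theorem cce_contains_intersection {n : ℕ} (P₁ P₂ : Matrix (Fin n) (Fin n) ℝ)
    (h₁ : P₁.PosDef) (h₂ : P₂.PosDef) (μ : Fin n → ℝ) (α : ℝ) (hα0 : 0 < α) (hα1 : α < 1)
    (X : Matrix (Fin n) (Fin n) ℝ) (hX : X = (α • P₁⁻¹ + (1 - α) • P₂⁻¹)⁻¹)
    (uhat : Fin n → ℝ) (huhat : uhat = X *ᵥ ((1 - α) • (P₂⁻¹ *ᵥ μ)))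
    (d2 : ℝ) (hd2 : d2 = μ ⬝ᵥ ((α⁻¹ • P₁ + (1 - α)⁻¹ • P₂)⁻¹ *ᵥ μ))
    (k : ℝ) (hk : k = 1 - d2) :
    (∀ u : Fin n → ℝ, u ⬝ᵥ (P₁⁻¹ *ᵥ u) ≤ 1 → (u - μ) ⬝ᵥ (P₂⁻¹ *ᵥ (u - μ)) ≤ 1 →
      (u - uhat) ⬝ᵥ (X⁻¹ *ᵥ (u - uhat)) ≤ k) ∧
    ((∃ u : Fin n → ℝ, u ⬝ᵥ (P₁⁻¹ *ᵥ u) ≤ 1 ∧ (u - μ) ⬝ᵥ (P₂⁻¹ *ᵥ (u - μ)) ≤ 1) → 0 ≤ k) := by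
  have hα1' : 0 < 1 - α := by linarith
  set A := P₁⁻¹ with hA
  set B := P₂⁻¹ with hB
  have hAp : A.PosDef := h₁.inv
  have hBp : B.PosDef := h₂.inv
  set Y : Matrix (Fin n) (Fin n) ℝ := α • A + (1 - α) • B with hYdef
  have hYp : Y.PosDef := (posdef_smul' hAp hα0).add (posdef_smul' hBp hα1')
  have hYdet : IsUnit Y.det := hYp.det_pos.ne'.isUnit
  have hXY : X * Y = 1 := by rw [hX]; exact nonsing_inv_mul Y hYdet
  have hYX : Y * X = 1 := by rw [hX]; exact mul_nonsing_inv Y hYdet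
  have hXinv : X⁻¹ = Y := by rw [hX]; exact nonsing_inv_nonsing_inv Y hYdet
  have hYuhat : Y *ᵥ uhat = (1 - α) • (B *ᵥ μ) := by
    rw [huhat, mulVec_mulVec, hYX, one_mulVec]
  -- matrix inverse identity for d2
  have hAP₁ : A * P₁ = 1 := nonsing_inv_mul P₁ h₁.det_pos.ne'.isUnit
  have hBP₂ : B * P₂ = 1 := nonsing_inv_mul P₂ h₂.det_pos.ne'.isUnit
  have hNM : ((α * (1 - α)) • (B * X * A)) * (α⁻¹ • P₁ + (1 - α)⁻¹ • P₂) = 1 := by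
    have c1 : α * (1 - α) * α⁻¹ = 1 - α := by field_simp
    have c2 : α * (1 - α) * (1 - α)⁻¹ = α := by field_simp
    rw [Matrix.mul_add, Matrix.smul_mul, Matrix.smul_mul, Matrix.mul_smul, Matrix.mul_smul,
      smul_smul, smul_smul, c1, c2, Matrix.mul_assoc (B * X) A P₁, hAP₁, Matrix.mul_one]
    have expand : (1 - α) • (B * X) + α • (B * X * A * P₂)
        = B * X * ((1 - α) • (B * P₂) + α • (A * P₂)) := by
      rw [Matrix.mul_add, Matrix.mul_smul, Matrix.mul_smul, hBP₂, Matrix.mul_one,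
        Matrix.mul_assoc (B * X) A P₂]
    rw [expand]
    have : (1 - α) • (B * P₂) + α • (A * P₂) = Y * P₂ := by
      rw [hYdef, Matrix.add_mul, Matrix.smul_mul, Matrix.smul_mul, add_comm]
    rw [this, ← Matrix.mul_assoc, Matrix.mul_assoc B X Y, hXY, Matrix.mul_one, hBP₂]
  have hMinv : (α⁻¹ • P₁ + (1 - α)⁻¹ • P₂)⁻¹ = (α * (1 - α)) • (B * X * A) :=
    inv_eq_left_inv hNM
  -- scalars
  have hd2' : d2 = (α * (1 - α)) * ((B *ᵥ μ) ⬝ᵥ (X *ᵥ (A *ᵥ μ))) := by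
    rw [hd2, hMinv, smul_mulVec, dotProduct_smul, smul_eq_mul]
    congr 1
    rw [← mulVec_mulVec, ← mulVec_mulVec, dot_symm' hBp.isHermitian, dotProduct_comm]
  set t : ℝ := (B *ᵥ μ) ⬝ᵥ (X *ᵥ (B *ᵥ μ)) with ht
  set r : ℝ := (B *ᵥ μ) ⬝ᵥ (X *ᵥ (A *ᵥ μ)) with hr
  set s4 : ℝ := μ ⬝ᵥ (B *ᵥ μ) with hs4
  -- F3 : (1-α) t + α r = s4
  have hXYμ : X *ᵥ (Y *ᵥ μ) = μ := by rw [mulVec_mulVec, hXY, one_mulVec]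
  have hF3 : (1 - α) * t + α * r = s4 := by
    have e : α • (X *ᵥ (A *ᵥ μ)) + (1 - α) • (X *ᵥ (B *ᵥ μ)) = μ := by
      rw [← mulVec_smul X α, ← mulVec_smul X (1 - α), ← mulVec_add]
      rw [hYdef] at hXYμ
      rwa [add_mulVec, smul_mulVec, smul_mulVec] at hXYμ
    calc (1 - α) * t + α * r
        = (B *ᵥ μ) ⬝ᵥ (α • (X *ᵥ (A *ᵥ μ)) + (1 - α) • (X *ᵥ (B *ᵥ μ))) := by
          rw [dotProduct_add, dotProduct_smul, dotProduct_smul]; ring_nf; rw [← ht, ← hr]; ring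
      _ = (B *ᵥ μ) ⬝ᵥ μ := by rw [e]
      _ = s4 := dotProduct_comm _ _
  have part1 : ∀ u : Fin n → ℝ, u ⬝ᵥ (A *ᵥ u) ≤ 1 → (u - μ) ⬝ᵥ (B *ᵥ (u - μ)) ≤ 1 →
      (u - uhat) ⬝ᵥ (X⁻¹ *ᵥ (u - uhat)) ≤ k := by
    intro u hu1 hu2
    set s1 : ℝ := u ⬝ᵥ (A *ᵥ u) with hs1
    set s2 : ℝ := u ⬝ᵥ (B *ᵥ u) with hs2
    set s3 : ℝ := u ⬝ᵥ (B *ᵥ μ) with hs3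
    have hF1 : (u - μ) ⬝ᵥ (B *ᵥ (u - μ)) = s2 - 2 * s3 + s4 := by
      rw [mulVec_sub, dotProduct_sub, sub_dotProduct, sub_dotProduct,
        dot_symm' hBp.isHermitian μ u, ← hs2, ← hs3, ← hs4]
      ring
    have huhat' : uhat = (1 - α) • (X *ᵥ (B *ᵥ μ)) := by rw [huhat, mulVec_smul]
    have hF2 : (u - uhat) ⬝ᵥ (Y *ᵥ (u - uhat))
        = (α * s1 + (1 - α) * s2) - 2 * ((1 - α) * s3) + (1 - α) ^ 2 * t := by
      have hYu : u ⬝ᵥ (Y *ᵥ u) = α * s1 + (1 - α) * s2 := by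
        rw [hYdef, add_mulVec, smul_mulVec, smul_mulVec, dotProduct_add,
          dotProduct_smul, dotProduct_smul, smul_eq_mul, smul_eq_mul]
      have hcross : u ⬝ᵥ (Y *ᵥ uhat) = (1 - α) * s3 := by
        rw [hYuhat, dotProduct_smul, smul_eq_mul]
      have hcross' : uhat ⬝ᵥ (Y *ᵥ u) = (1 - α) * s3 := by
        rw [dot_symm' hYp.isHermitian, hcross]
      have hquad : uhat ⬝ᵥ (Y *ᵥ uhat) = (1 - α) ^ 2 * t := by
        rw [hYuhat, dotProduct_smul, smul_eq_mul, huhat', smul_dotProduct, smul_eq_mul,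
          dotProduct_comm, ← ht]
        ring
      rw [mulVec_sub, dotProduct_sub, sub_dotProduct, sub_dotProduct, hYu, hcross, hcross',
        hquad]
      ring
    rw [hXinv, hk, hd2']
    rw [hF1] at hu2
    have h1 : α * s1 ≤ α * 1 := by
      apply mul_le_mul_of_nonneg_left _ hα0.le
      exact hu1
    have h2 : (1 - α) * (s2 - 2 * s3 + s4) ≤ (1 - α) * 1 :=
      mul_le_mul_of_nonneg_left hu2 hα1'.le
    rw [hF2]
    nlinarith [hF3]
  refine ⟨part1, ?_⟩
  rintro ⟨u, hu1, hu2⟩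
  have hle := part1 u hu1 hu2
  have hnn : 0 ≤ (u - uhat) ⬝ᵥ (X⁻¹ *ᵥ (u - uhat)) := by
    rw [hXinv]
    simpa using hYp.posSemidef.dotProduct_mulVec_nonneg (u - uhat)
  linarith
end
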